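/- Let N ≥ 1 be an integer, ε := 1/N, and let β : ℤ → ℝ be 2N-periodic. For every u ∈ U, the following identities hold: ⟨L₁ u, u⟩ = ‖Du‖²_{ℓ²_ε}, and ⟨L₂ u, u⟩ = 4‖Du‖²_{ℓ²_ε} − ε³ Σ_{ℓ=−N+1}^{N} β_ℓ ((D²u)_ℓ)² + R + S + T, where R := Σ_{ℓ=−N+1}^{N} 2ε³ (D²β)_ℓ ((Du)_ℓ)², S := Σ_{ℓ=−N+1}^{N} ε⁴ (D²β)_ℓ (D²u)_ℓ (Du)_ℓ, and T := Σ_{ℓ=−N+1}^{N} ε³ (D³β)_{ℓ+1} u_ℓ (Du)_{ℓ+1}. -/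

import Mathlib

open Finset

noncomputable section

/-- mesh size ε = 1/N -/
def eps (N : ℕ) : ℝ := 1 / N

/-- the periodic cell {-N+1, …, N} -/
def cell (N : ℕ) : Finset ℤ := Finset.Icc (-(N : ℤ) + 1) N

/-- 2N-periodicity -/
def Per (N : ℕ) (u : ℤ → ℝ) : Prop := ∀ ℓ : ℤ, u (ℓ + 2 * N) = u ℓ

/-- zero mean over a period -/
def MeanZero (N : ℕ) (u : ℤ → ℝ) : Prop := ∑ ℓ ∈ cell N, u ℓ = 0

/-- first discrete derivative (Du)_ℓ = (u_ℓ - u_{ℓ-1})/ε -/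
def D (N : ℕ) (u : ℤ → ℝ) (ℓ : ℤ) : ℝ := (u ℓ - u (ℓ - 1)) / eps N

/-- second discrete derivative (D²u)_ℓ = ((Du)_{ℓ+1} - (Du)_ℓ)/ε -/
def D2 (N : ℕ) (u : ℤ → ℝ) (ℓ : ℤ) : ℝ := (D N u (ℓ + 1) - D N u ℓ) / eps N

/-- third discrete derivative (D³u)_ℓ = ((D²u)_ℓ - (D²u)_{ℓ-1})/ε -/
def D3 (N : ℕ) (u : ℤ → ℝ) (ℓ : ℤ) : ℝ := (D2 N u ℓ - D2 N u (ℓ - 1)) / eps N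

/-- the ℓ²_ε inner product ⟨u,w⟩ = ε Σ u_ℓ w_ℓ -/
def ip (N : ℕ) (u w : ℤ → ℝ) : ℝ := ∑ ℓ ∈ cell N, eps N * (u ℓ * w ℓ)

/-- the squared ℓ²_ε norm ‖u‖² = ε Σ |u_ℓ|² -/
def nsq (N : ℕ) (u : ℤ → ℝ) : ℝ := ∑ ℓ ∈ cell N, eps N * |u ℓ| ^ 2

/-- nearest-neighbour part `(L₁v)_ℓ := (−v_{ℓ+1} + 2v_ℓ − v_{ℓ−1})/ε²` -/
def L1 (N : ℕ) (v : ℤ → ℝ) (ℓ : ℤ) : ℝ :=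
  (-v (ℓ + 1) + 2 * v ℓ - v (ℓ - 1)) / eps N ^ 2

/-- blended second-neighbour part
`(L₂v)_ℓ := β_ℓ(−v_{ℓ+2} + 2v_ℓ − v_{ℓ−2})/ε² + (1−β_ℓ)·4·(−v_{ℓ+1} + 2v_ℓ − v_{ℓ−1})/ε²` -/
def L2 (N : ℕ) (β : ℤ → ℝ) (v : ℤ → ℝ) (ℓ : ℤ) : ℝ :=
  β ℓ * (-v (ℓ + 2) + 2 * v ℓ - v (ℓ - 2)) / eps N ^ 2
    + (1 - β ℓ) * 4 * (-v (ℓ + 1) + 2 * v ℓ - v (ℓ - 1)) / eps N ^ 2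

/-- the error term R -/
def Rterm (N : ℕ) (β u : ℤ → ℝ) : ℝ :=
  ∑ ℓ ∈ cell N, 2 * eps N ^ 3 * D2 N β ℓ * (D N u ℓ) ^ 2

/-- the error term S -/
def Sterm (N : ℕ) (β u : ℤ → ℝ) : ℝ :=
  ∑ ℓ ∈ cell N, eps N ^ 4 * D2 N β ℓ * D2 N u ℓ * D N u ℓ

/-- the error term T -/
def Tterm (N : ℕ) (β u : ℤ → ℝ) : ℝ :=
  ∑ ℓ ∈ cell N, eps N ^ 3 * D3 N β (ℓ + 1) * u ℓ * D N u (ℓ + 1)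

section Aux

lemma eps_ne_zero (N : ℕ) (hN : 1 ≤ N) : eps N ≠ 0 := by
  have : (N : ℝ) ≠ 0 := Nat.cast_ne_zero.mpr (by omega)
  simp [eps, this]

lemma shift_sum (N : ℕ) (hN : 1 ≤ N) (f : ℤ → ℝ) (hf : Per N f) :
    ∑ ℓ ∈ cell N, f (ℓ + 1) = ∑ ℓ ∈ cell N, f ℓ := by
  have hN' : (1 : ℤ) ≤ (N : ℤ) := by exact_mod_cast hN
  have e1 : ∑ ℓ ∈ cell N, f (ℓ + 1)
      = ∑ ℓ ∈ Finset.Icc (-(N : ℤ) + 1 + 1) ((N : ℤ) + 1), f ℓ := by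
    rw [cell, ← Finset.map_add_right_Icc, Finset.sum_map]
    simp [addRightEmbedding]
  have e2 : Finset.Icc (-(N : ℤ) + 1 + 1) ((N : ℤ) + 1)
      = insert ((N : ℤ) + 1) (Finset.Icc (-(N : ℤ) + 2) (N : ℤ)) := by
    ext x; simp only [Finset.mem_Icc, Finset.mem_insert]; omega
  have e3 : cell N = insert (-(N : ℤ) + 1) (Finset.Icc (-(N : ℤ) + 2) (N : ℤ)) := by
    rw [cell]; ext x; simp only [Finset.mem_Icc, Finset.mem_insert]; omega
  have hmem1 : ((N : ℤ) + 1) ∉ Finset.Icc (-(N : ℤ) + 2) (N : ℤ) := by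
    simp only [Finset.mem_Icc]; omega
  have hmem2 : (-(N : ℤ) + 1) ∉ Finset.Icc (-(N : ℤ) + 2) (N : ℤ) := by
    simp only [Finset.mem_Icc]; omega
  rw [e1, e2, e3, Finset.sum_insert hmem1, Finset.sum_insert hmem2]
  have hval : f ((N : ℤ) + 1) = f (-(N : ℤ) + 1) := by
    have := hf (-(N : ℤ) + 1)
    rw [show (N : ℤ) + 1 = -(N : ℤ) + 1 + 2 * N from by ring, this]
  rw [hval]

lemma tele_sum (N : ℕ) (hN : 1 ≤ N) (H : ℤ → ℝ) (hH : Per N H) :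
    ∑ ℓ ∈ cell N, (H (ℓ + 1) - H ℓ) = 0 := by
  rw [Finset.sum_sub_distrib, shift_sum N hN H hH, sub_self]

end Aux

/-- telescoping potential for the `L₁` identity -/
def H1fun (N : ℕ) (u : ℤ → ℝ) (ℓ : ℤ) : ℝ := (u (ℓ - 1) ^ 2 - u ℓ * u (ℓ - 1)) / eps N

/-- telescoping potential for the `L₂` identity -/
def H2fun (N : ℕ) (β u : ℤ → ℝ) (ℓ : ℤ) : ℝ :=
  (-(β (ℓ - 1) * u (ℓ - 1) * u ℓ) - β (ℓ - 1) * u (ℓ - 1) * u (ℓ + 1)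
    + β (ℓ - 1) * u (ℓ - 1) ^ 2 + β (ℓ - 1) * u ℓ ^ 2
    + β ℓ * u (ℓ - 2) * u ℓ + 2 * β ℓ * u (ℓ - 1) * u ℓ - 3 * β ℓ * u (ℓ - 1) ^ 2
    - β (ℓ + 1) * u (ℓ - 1) * u ℓ + β (ℓ + 1) * u (ℓ - 1) ^ 2
    - 4 * u (ℓ - 1) * u ℓ + 4 * u (ℓ - 1) ^ 2) / eps N

lemma H1per (N : ℕ) (u : ℤ → ℝ) (hper : Per N u) : Per N (H1fun N u) := by
  intro ℓ
  simp only [H1fun]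
  rw [show ℓ + 2 * (N : ℤ) - 1 = ℓ - 1 + 2 * N from by ring, hper (ℓ - 1), hper ℓ]

lemma H2per (N : ℕ) (β u : ℤ → ℝ) (hβper : Per N β) (hper : Per N u) :
    Per N (H2fun N β u) := by
  intro ℓ
  simp only [H2fun]
  rw [show ℓ + 2 * (N : ℤ) - 1 = ℓ - 1 + 2 * N from by ring,
    show ℓ + 2 * (N : ℤ) - 2 = ℓ - 2 + 2 * N from by ring,
    show ℓ + 2 * (N : ℤ) + 1 = ℓ + 1 + 2 * N from by ring,
    hper (ℓ - 1), hper (ℓ - 2), hper (ℓ + 1), hper ℓ,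
    hβper (ℓ - 1), hβper (ℓ + 1), hβper ℓ]

/-- divergence form of the quadratic forms of `L₁` and `L₂`. -/
theorem stmt_4 (N : ℕ) (hN : 1 ≤ N) (β : ℤ → ℝ) (hβper : Per N β)
    (u : ℤ → ℝ) (hper : Per N u) (hmean : MeanZero N u) :
    ip N (L1 N u) u = nsq N (D N u) ∧
      ip N (L2 N β u) u
        = 4 * nsq N (D N u) - eps N ^ 3 * ∑ ℓ ∈ cell N, β ℓ * (D2 N u ℓ) ^ 2
            + Rterm N β u + Sterm N β u + Tterm N β u := by
  have heps : eps N ≠ 0 := eps_ne_zero N hN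
  constructor
  · have key1 : ∀ ℓ ∈ cell N,
        eps N * (L1 N u ℓ * u ℓ) - eps N * |D N u ℓ| ^ 2
          = H1fun N u (ℓ + 1) - H1fun N u ℓ := by
      intro ℓ _
      simp only [L1, D, H1fun, sq_abs,
        show ∀ k : ℤ, k + 1 - 1 = k from fun k => by ring]
      field_simp
      ring
    have h0 : ip N (L1 N u) u - nsq N (D N u) = 0 := by
      rw [ip, nsq, ← Finset.sum_sub_distrib, Finset.sum_congr rfl key1]
      exact tele_sum N hN _ (H1per N u hper)
    linarith
  · have key2 : ∀ ℓ ∈ cell N,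
        eps N * (L2 N β u ℓ * u ℓ)
          - (4 * (eps N * |D N u ℓ| ^ 2) - eps N ^ 3 * (β ℓ * D2 N u ℓ ^ 2)
            + 2 * eps N ^ 3 * D2 N β ℓ * D N u ℓ ^ 2
            + eps N ^ 4 * D2 N β ℓ * D2 N u ℓ * D N u ℓ
            + eps N ^ 3 * D3 N β (ℓ + 1) * u ℓ * D N u (ℓ + 1))
          = H2fun N β u (ℓ + 1) - H2fun N β u ℓ := by
      intro ℓ _
      simp only [L2, D, D2, D3, H2fun, sq_abs,
        show ∀ k : ℤ, k + 1 - 1 = k from fun k => by ring,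
        show ∀ k : ℤ, k + 1 - 2 = k - 1 from fun k => by ring,
        show ∀ k : ℤ, k + 1 + 1 = k + 2 from fun k => by ring,
        show ∀ k : ℤ, k + 2 - 1 = k + 1 from fun k => by ring,
        show ∀ k : ℤ, k - 1 + 1 = k from fun k => by ring]
      field_simp
      ring
    have h0 : ip N (L2 N β u) u
        - (4 * nsq N (D N u) - eps N ^ 3 * ∑ ℓ ∈ cell N, β ℓ * D2 N u ℓ ^ 2
            + Rterm N β u + Sterm N β u + Tterm N β u) = 0 := by
      rw [ip, nsq, Rterm, Sterm, Tterm, Finset.mul_sum, Finset.mul_sum,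
        ← Finset.sum_sub_distrib, ← Finset.sum_add_distrib, ← Finset.sum_add_distrib,
        ← Finset.sum_add_distrib, ← Finset.sum_sub_distrib,
        Finset.sum_congr rfl key2]
      exact tele_sum N hN _ (H2per N β u hβper hper)
    linarith
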